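/- Let M'₁, M'₂ be matroids on a common finite ground set N' with rank functions rk'₁, rk'₂, let w : N' → ℕ with 1 ≤ w(e) ≤ W, and let M₁, M₂ be the unfolded matroids on N with rank functions rk₁, rk₂. Suppose y', z' assign nonnegative integers to subsets of N', the supports of y' and of z' are each totally ordered by strict inclusion (chains), and for every e ∈ N' we have ∑_{S' ⊆ N' : e ∈ S'} (y'(S') + z'(S')) ≥ w(e). Then there exist functions y, z assigning nonnegative integers to subsets of N such that (a) for every (e,i) ∈ N, ∑_{S ⊆ N : (e,i) ∈ S} (y(S) + z(S)) ≥ 1, and (b) ∑_{S ⊆ N} (y(S)·rk₁(S) + z(S)·rk₂(S)) ≤ ∑_{S' ⊆ N'} (y'(S')·rk'₁(S') + z'(S')·rk'₂(S')). -/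

import Mathlib

open Finset

/-- A matroid on a finite ground set, given by its family of independent sets. -/
structure FinMatroid (α : Type*) [DecidableEq α] [Fintype α] where
  Indep : Finset α → Prop
  indep_empty : Indep ∅
  indep_subset : ∀ ⦃A B : Finset α⦄, A ⊆ B → Indep B → Indep A
  indep_exchange : ∀ ⦃A B : Finset α⦄, Indep A → Indep B → B.card < A.card →
    ∃ x ∈ A \ B, Indep (insert x B)

/-- The rank of a set `S` in a matroid: the size of a largest independent subset of `S`. -/
noncomputable def FinMatroid.rank {α : Type*} [DecidableEq α] [Fintype α]
    (M : FinMatroid α) (S : Finset α) : ℕ :=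
  sSup {n : ℕ | ∃ I ⊆ S, M.Indep I ∧ I.card = n}

/-- The rank of `S` with respect to an arbitrary independence predicate. -/
noncomputable def frank {β : Type*} (Ind : Finset β → Prop) (S : Finset β) : ℕ :=
  sSup {n : ℕ | ∃ I ⊆ S, Ind I ∧ I.card = n}

variable {α : Type*} [DecidableEq α] [Fintype α]

/-- The unfolded ground set `N = {(e,i) : e ∈ N', 1 ≤ i ≤ w e}`. -/
def unfoldGround (w : α → ℕ) : Finset (α × ℕ) :=
  Finset.univ.biUnion fun e => (Finset.Icc 1 (w e)).image fun i => (e, i)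

/-- The `i`-th layer projection `{e ∈ N' : (e,i) ∈ I}`. -/
def proj1 (I : Finset (α × ℕ)) (i : ℕ) : Finset α :=
  Finset.univ.filter fun e => (e, i) ∈ I

/-- The `i`-th reverse-layer projection `{e ∈ N' : (e, w e - i + 1) ∈ I}`. -/
def proj2 (w : α → ℕ) (I : Finset (α × ℕ)) (i : ℕ) : Finset α :=
  Finset.univ.filter fun e => i ≤ w e ∧ (e, w e - i + 1) ∈ I

/-- Independence in the unfolded matroid `M₁`. -/
def UnfoldIndep1 (M' : FinMatroid α) (w : α → ℕ) (W : ℕ) (I : Finset (α × ℕ)) : Prop :=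
  I ⊆ unfoldGround w ∧ ∀ i ∈ Finset.Icc 1 W, M'.Indep (proj1 I i)

/-- Independence in the unfolded matroid `M₂`. -/
def UnfoldIndep2 (M' : FinMatroid α) (w : α → ℕ) (W : ℕ) (I : Finset (α × ℕ)) : Prop :=
  I ⊆ unfoldGround w ∧ ∀ i ∈ Finset.Icc 1 W, M'.Indep (proj2 w I i)

/-- The unfolding `{(e,i) : e ∈ S', 1 ≤ i ≤ w e}` of a set `S' ⊆ N'`. -/
def unfoldSet (w : α → ℕ) (S' : Finset α) : Finset (α × ℕ) :=
  S'.biUnion fun e => (Finset.Icc 1 (w e)).image fun i => (e, i)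


section Aux
variable {β : Type*}

lemma frank_le' {Ind : Finset β → Prop} {S : Finset β} {m : ℕ}
    (h : ∀ I : Finset β, I ⊆ S → Ind I → I.card ≤ m) : frank Ind S ≤ m := by
  apply csSup_le'
  rintro n ⟨I, hIS, hI, rfl⟩
  exact h I hIS hI

lemma le_frank' {Ind : Finset β → Prop} {S I : Finset β}
    (hIS : I ⊆ S) (hI : Ind I) : I.card ≤ frank Ind S := by
  apply le_csSup
  · exact ⟨S.card, by rintro n ⟨J, hJS, _, rfl⟩; exact card_le_card hJS⟩
  · exact ⟨I, hIS, hI, rfl⟩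

lemma sum_count_mul [DecidableEq β] (s : Finset ℕ) (t : Finset β) (g : ℕ → β)
    (h : ∀ k ∈ s, g k ∈ t) (f : β → ℕ) :
    ∑ S ∈ t, (s.filter fun k => g k = S).card * f S = ∑ k ∈ s, f (g k) := by
  rw [← Finset.sum_fiberwise_of_maps_to h (fun k => f (g k))]
  refine sum_congr rfl fun S _ => ?_
  rw [Finset.sum_congr rfl (fun k hk => by rw [(mem_filter.mp hk).2]), sum_const, smul_eq_mul]

end Aux

lemma rank_eq_frank {α : Type*} [DecidableEq α] [Fintype α] (M : FinMatroid α) (S : Finset α) :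
    M.rank S = frank M.Indep S := rfl

lemma rank_mono {α : Type*} [DecidableEq α] [Fintype α] (M : FinMatroid α) {S T : Finset α}
    (h : S ⊆ T) : M.rank S ≤ M.rank T := by
  rw [rank_eq_frank, rank_eq_frank]
  exact frank_le' fun I hIS hI => le_frank' (hIS.trans h) hI

lemma mem_unfoldGround {α : Type*} [DecidableEq α] [Fintype α] {w : α → ℕ} {p : α × ℕ} :
    p ∈ unfoldGround w ↔ 1 ≤ p.2 ∧ p.2 ≤ w p.1 := by
  unfold unfoldGround
  simp only [mem_biUnion, mem_univ, true_and, mem_image, mem_Icc, Prod.ext_iff]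
  constructor
  · rintro ⟨e, i, ⟨h1, h2⟩, rfl, rfl⟩; exact ⟨h1, h2⟩
  · rintro ⟨h1, h2⟩; exact ⟨p.1, p.2, ⟨h1, h2⟩, rfl, rfl⟩

/-- The cumulative weight of element `e` under dual `y'`. -/
def aFun {α : Type*} [DecidableEq α] [Fintype α] (y' : Finset α → ℕ) (e : α) : ℕ :=
  ∑ S ∈ univ.filter (fun S : Finset α => e ∈ S), y' S

/-- `k`-th layer dual set for `M₁`. -/
def Uset {α : Type*} [DecidableEq α] [Fintype α] (w : α → ℕ) (y' : Finset α → ℕ) (k : ℕ) :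
    Finset (α × ℕ) :=
  (unfoldGround w).filter fun p => p.2 = k ∧ k ≤ aFun y' p.1

/-- `k`-th reverse layer dual set for `M₂`. -/
def Vset {α : Type*} [DecidableEq α] [Fintype α] (w : α → ℕ) (z' : Finset α → ℕ) (k : ℕ) :
    Finset (α × ℕ) :=
  (unfoldGround w).filter fun p => k ≤ w p.1 ∧ p.2 = w p.1 - k + 1 ∧ k ≤ aFun z' p.1

section Main
variable {α : Type*} [DecidableEq α] [Fintype α]

lemma aFun_le (y' : Finset α → ℕ) (e : α) : aFun y' e ≤ ∑ S : Finset α, y' S :=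
  Finset.sum_le_sum_of_subset (filter_subset _ _)

lemma frank_Uset_le (M' : FinMatroid α) (w : α → ℕ) (W : ℕ) (hw : ∀ e : α, 1 ≤ w e ∧ w e ≤ W)
    (y' : Finset α → ℕ) (k : ℕ) (hk : 1 ≤ k) :
    frank (UnfoldIndep1 M' w W) (Uset w y' k)
      ≤ M'.rank (univ.filter fun e => k ≤ aFun y' e) := by
  apply frank_le'
  intro I hIS hI
  rcases I.eq_empty_or_nonempty with rfl | ⟨p0, hp0⟩
  · simp
  have hp0U := hIS hp0
  simp only [Uset, mem_filter] at hp0U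
  have hg := mem_unfoldGround.mp hp0U.1
  have hkW : k ≤ W := by have h1 := (hw p0.1).2; have h2 := hp0U.2.1; omega
  have hind : M'.Indep (proj1 I k) := hI.2 k (by simp only [mem_Icc]; omega)
  have himg : (proj1 I k).image (fun e => (e, k)) = I := by
    ext p
    simp only [proj1, mem_image, mem_filter, mem_univ, true_and]
    constructor
    · rintro ⟨e, he, rfl⟩; exact he
    · intro hpI
      have h2 := hIS hpI
      simp only [Uset, mem_filter] at h2
      refine ⟨p.1, ?_⟩
      rw [show ((p.1, k) : α × ℕ) = p from Prod.ext rfl h2.2.1.symm]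
      exact ⟨hpI, rfl⟩
  have hcard : (proj1 I k).card = I.card := by
    conv_rhs => rw [← himg]
    rw [card_image_of_injective _ (fun x y h => congrArg Prod.fst h)]
  rw [← hcard, rank_eq_frank]
  refine le_frank' ?_ hind
  intro e he
  simp only [proj1, mem_filter, mem_univ, true_and] at he ⊢
  have h2 := hIS he
  simp only [Uset, mem_filter] at h2
  exact h2.2.2

lemma frank_Vset_le (M' : FinMatroid α) (w : α → ℕ) (W : ℕ) (hw : ∀ e : α, 1 ≤ w e ∧ w e ≤ W)
    (z' : Finset α → ℕ) (k : ℕ) (hk : 1 ≤ k) :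
    frank (UnfoldIndep2 M' w W) (Vset w z' k)
      ≤ M'.rank (univ.filter fun e => k ≤ aFun z' e) := by
  apply frank_le'
  intro I hIS hI
  rcases I.eq_empty_or_nonempty with rfl | ⟨p0, hp0⟩
  · simp
  have hp0U := hIS hp0
  simp only [Vset, mem_filter] at hp0U
  have hkW : k ≤ W := by have h1 := (hw p0.1).2; have h2 := hp0U.2.1; omega
  have hind : M'.Indep (proj2 w I k) := hI.2 k (by simp only [mem_Icc]; omega)
  have himg : (proj2 w I k).image (fun e => (e, w e - k + 1)) = I := by
    ext p
    simp only [proj2, mem_image, mem_filter, mem_univ, true_and]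
    constructor
    · rintro ⟨e, he, rfl⟩; exact he.2
    · intro hpI
      have h2 := hIS hpI
      simp only [Vset, mem_filter] at h2
      refine ⟨p.1, ⟨h2.2.1, ?_⟩, Prod.ext rfl h2.2.2.1.symm⟩
      rw [show ((p.1, w p.1 - k + 1) : α × ℕ) = p from Prod.ext rfl h2.2.2.1.symm]
      exact hpI
  have hcard : (proj2 w I k).card = I.card := by
    conv_rhs => rw [← himg]
    rw [card_image_of_injective _ (fun x y h => congrArg Prod.fst h)]
  rw [← hcard, rank_eq_frank]
  refine le_frank' ?_ hind
  intro e he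
  simp only [proj2, mem_filter, mem_univ, true_and] at he ⊢
  have h2 := hIS he.2
  simp only [Vset, mem_filter] at h2
  exact h2.2.2.2

lemma chain_sum (r : Finset α → ℕ) (hr : ∀ ⦃S T : Finset α⦄, S ⊆ T → r S ≤ r T) :
    ∀ (n : ℕ) (y' : Finset α → ℕ),
      (∀ S T : Finset α, y' S ≠ 0 → y' T ≠ 0 → S ⊆ T ∨ T ⊆ S) →
      (∑ S : Finset α, y' S) = n →
      ∑ k ∈ Icc 1 n, r (univ.filter fun e => k ≤ aFun y' e)
        ≤ ∑ S : Finset α, y' S * r S := by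
  intro n
  induction n with
  | zero => intro y' _ _; simp
  | succ n ih =>
    intro y' hchain hsum
    have hne : ∃ S : Finset α, y' S ≠ 0 := by
      by_contra h
      push_neg at h
      rw [Finset.sum_eq_zero (fun S _ => h S)] at hsum
      omega
    obtain ⟨S0, hS0⟩ := hne
    obtain ⟨Sm, hSmmem, hSmmax⟩ :=
      Finset.exists_max_image (univ.filter fun S : Finset α => y' S ≠ 0) card
        ⟨S0, mem_filter.mpr ⟨mem_univ _, hS0⟩⟩
    have hSm : y' Sm ≠ 0 := (mem_filter.mp hSmmem).2
    have hmax : ∀ S : Finset α, y' S ≠ 0 → S ⊆ Sm := by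
      intro S hS
      rcases hchain S Sm hS hSm with h | h
      · exact h
      · have hc := hSmmax S (mem_filter.mpr ⟨mem_univ _, hS⟩)
        rw [Finset.eq_of_subset_of_card_le h hc]
    -- aFun y' e = 0 for e ∉ Sm
    have hzero : ∀ e : α, e ∉ Sm → aFun y' e = 0 := by
      intro e he
      refine Finset.sum_eq_zero fun S hS => ?_
      by_contra h
      exact he (hmax S h ((mem_filter.mp hS).2))
    set y'' := Function.update y' Sm (y' Sm - 1) with hy''
    have hy''eq : ∀ S : Finset α, S ≠ Sm → y'' S = y' S := fun S hS =>
      Function.update_of_ne hS _ _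
    have hy''Sm : y'' Sm = y' Sm - 1 := Function.update_self _ _ _
    have hchain'' : ∀ S T : Finset α, y'' S ≠ 0 → y'' T ≠ 0 → S ⊆ T ∨ T ⊆ S := by
      intro S T hS hT
      apply hchain
      · by_cases h : S = Sm
        · exact h ▸ hSm
        · rwa [← hy''eq S h]
      · by_cases h : T = Sm
        · exact h ▸ hSm
        · rwa [← hy''eq T h]
    have hsum'' : (∑ S : Finset α, y'' S) = n := by
      have h1 := Finset.sum_update_of_mem (mem_univ Sm) y' (y' Sm - 1)
      have h2 : (∑ S : Finset α, y' S) = y' Sm + ∑ S ∈ univ \ {Sm}, y' S := by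
        rw [← Finset.add_sum_erase _ _ (mem_univ Sm), Finset.sdiff_singleton_eq_erase]
      rw [hy'', h1]
      omega
    have haFun : ∀ e : α, e ∈ Sm → aFun y'' e + 1 = aFun y' e := by
      intro e he
      have hSm_mem : Sm ∈ univ.filter (fun S : Finset α => e ∈ S) := by
        simp [he]
      have h1 := Finset.sum_update_of_mem hSm_mem y' (y' Sm - 1)
      have h2 : aFun y' e = y' Sm + ∑ S ∈ (univ.filter fun S : Finset α => e ∈ S) \ {Sm}, y' S := by
        rw [aFun, ← Finset.add_sum_erase _ _ hSm_mem, Finset.sdiff_singleton_eq_erase]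
      rw [aFun, hy'', h1]
      omega
    have haFun2 : ∀ e : α, e ∉ Sm → aFun y'' e = 0 := by
      intro e he
      refine Finset.sum_eq_zero fun S hS => ?_
      by_contra h
      have : y' S ≠ 0 := by
        by_cases hSSm : S = Sm
        · exact hSSm ▸ hSm
        · rwa [← hy''eq S hSSm]
      exact he (hmax S this ((mem_filter.mp hS).2))
    have hT : ∀ k : ℕ, 1 ≤ k →
        (univ.filter fun e => k + 1 ≤ aFun y' e) = (univ.filter fun e => k ≤ aFun y'' e) := by
      intro k hk
      ext e
      simp only [mem_filter, mem_univ, true_and]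
      by_cases he : e ∈ Sm
      · have := haFun e he; omega
      · have h1 := hzero e he; have h2 := haFun2 e he; omega
    -- split the sum
    have hsplit : ∑ k ∈ Icc 1 (n + 1), r (univ.filter fun e => k ≤ aFun y' e)
        = r (univ.filter fun e => 1 ≤ aFun y' e)
          + ∑ k ∈ Icc 1 n, r (univ.filter fun e => k + 1 ≤ aFun y' e) := by
      have h1 : Icc 1 (n + 1) = (Icc 0 n).map (addRightEmbedding 1) := by
        rw [Finset.map_add_right_Icc]
      have h2 : Icc 0 n = insert 0 (Icc 1 n) := by
        ext k; simp only [mem_Icc, mem_insert]; omega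
      rw [h1, Finset.sum_map, h2, Finset.sum_insert (by simp)]
      simp [addRightEmbedding_apply]
    have hfirst : r (univ.filter fun e => 1 ≤ aFun y' e) ≤ r Sm := by
      apply hr
      intro e he
      simp only [mem_filter, mem_univ, true_and] at he
      by_contra h
      rw [hzero e h] at he
      omega
    have hrhs : (∑ S : Finset α, y' S * r S) = r Sm + ∑ S : Finset α, y'' S * r S := by
      have h1 := Finset.sum_update_of_mem (mem_univ Sm) (fun S => y' S * r S)
        ((y' Sm - 1) * r Sm)
      have h2 : (∑ S : Finset α, y' S * r S)
          = y' Sm * r Sm + ∑ S ∈ univ \ {Sm}, y' S * r S := by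
        rw [← Finset.add_sum_erase _ _ (mem_univ Sm), Finset.sdiff_singleton_eq_erase]
      have h3 : (∑ S : Finset α, y'' S * r S)
          = (y' Sm - 1) * r Sm + ∑ S ∈ univ \ {Sm}, y' S * r S := by
        calc (∑ S : Finset α, y'' S * r S)
            = ∑ S : Finset α, Function.update (fun S => y' S * r S) Sm ((y' Sm - 1) * r Sm) S := by
              refine Finset.sum_congr rfl fun S _ => ?_
              by_cases hS : S = Sm
              · subst hS; rw [hy''Sm, Function.update_self]
              · rw [hy''eq S hS, Function.update_of_ne hS]
          _ = (y' Sm - 1) * r Sm + ∑ S ∈ univ \ {Sm}, y' S * r S := h1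
      obtain ⟨m, hm⟩ := Nat.exists_eq_succ_of_ne_zero hSm
      have h4 : y' Sm * r Sm = r Sm + (y' Sm - 1) * r Sm := by
        rw [hm, Nat.succ_sub_one, Nat.succ_mul, add_comm]
      omega
    rw [hsplit, hrhs]
    have := ih y'' hchain'' hsum''
    calc r (univ.filter fun e => 1 ≤ aFun y' e)
          + ∑ k ∈ Icc 1 n, r (univ.filter fun e => k + 1 ≤ aFun y' e)
        = r (univ.filter fun e => 1 ≤ aFun y' e)
          + ∑ k ∈ Icc 1 n, r (univ.filter fun e => k ≤ aFun y'' e) := by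
          congr 1
          refine Finset.sum_congr rfl fun k hk => ?_
          rw [hT k (mem_Icc.mp hk).1]
      _ ≤ r Sm + ∑ S : Finset α, y'' S * r S := add_le_add hfirst this

end Main

/-- from an integral feasible dual solution `(y', z')` for the
weighted matroid intersection LP whose supports are chains, one can construct
an integral feasible dual solution `(y, z)` for the unfolded (unweighted)
matroid intersection LP whose objective value is no larger. -/
theorem dual_unfolding (M'₁ M'₂ : FinMatroid α) (w : α → ℕ) (W : ℕ)
    (hw : ∀ e : α, 1 ≤ w e ∧ w e ≤ W)
    (y' z' : Finset α → ℕ)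
    (hy'chain : ∀ S T : Finset α, y' S ≠ 0 → y' T ≠ 0 → S ⊆ T ∨ T ⊆ S)
    (hz'chain : ∀ S T : Finset α, z' S ≠ 0 → z' T ≠ 0 → S ⊆ T ∨ T ⊆ S)
    (hfeas : ∀ e : α,
      w e ≤ ∑ S' ∈ Finset.univ.powerset.filter (fun S' : Finset α => e ∈ S'),
        (y' S' + z' S')) :
    ∃ y z : Finset (α × ℕ) → ℕ,
      (∀ p ∈ unfoldGround w,
        1 ≤ ∑ S ∈ (unfoldGround w).powerset.filter (fun S : Finset (α × ℕ) => p ∈ S),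
          (y S + z S)) ∧
      ∑ S ∈ (unfoldGround w).powerset,
          (y S * frank (UnfoldIndep1 M'₁ w W) S + z S * frank (UnfoldIndep2 M'₂ w W) S) ≤
        ∑ S' ∈ Finset.univ.powerset,
          (y' S' * M'₁.rank S' + z' S' * M'₂.rank S') := by
  classical
  refine ⟨fun S => ((Icc 1 (∑ T : Finset α, y' T)).filter fun k => Uset w y' k = S).card,
          fun S => ((Icc 1 (∑ T : Finset α, z' T)).filter fun k => Vset w z' k = S).card,
          ?_, ?_⟩
  · -- covering constraint
    intro p hp
    have hpg := mem_unfoldGround.mp hp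
    have hab : w p.1 ≤ aFun y' p.1 + aFun z' p.1 := by
      have hfe := hfeas p.1
      rwa [Finset.powerset_univ, Finset.sum_add_distrib] at hfe
    by_cases hc : p.2 ≤ aFun y' p.1
    · have hkA : p.2 ∈ Icc 1 (∑ T : Finset α, y' T) :=
        mem_Icc.mpr ⟨hpg.1, hc.trans (aFun_le _ _)⟩
      have hpU : p ∈ Uset w y' p.2 := by
        simp only [Uset]
        exact mem_filter.mpr ⟨hp, rfl, hc⟩
      have hUmem : Uset w y' p.2 ∈
          (unfoldGround w).powerset.filter (fun S : Finset (α × ℕ) => p ∈ S) :=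
        mem_filter.mpr ⟨mem_powerset.mpr (filter_subset _ _), hpU⟩
      have h1 : 1 ≤ ((Icc 1 (∑ T : Finset α, y' T)).filter
          fun k => Uset w y' k = Uset w y' p.2).card :=
        Finset.card_pos.mpr ⟨p.2, mem_filter.mpr ⟨hkA, rfl⟩⟩
      have hs := Finset.single_le_sum (f := fun S : Finset (α × ℕ) =>
        ((Icc 1 (∑ T : Finset α, y' T)).filter fun k => Uset w y' k = S).card
        + ((Icc 1 (∑ T : Finset α, z' T)).filter fun k => Vset w z' k = S).card)
        (fun _ _ => Nat.zero_le _) hUmem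
      exact le_trans (le_trans h1 (Nat.le_add_right _ _)) hs
    · have hk1 : 1 ≤ w p.1 - p.2 + 1 := by omega
      have hkb : w p.1 - p.2 + 1 ≤ aFun z' p.1 := by omega
      have hkB : w p.1 - p.2 + 1 ∈ Icc 1 (∑ T : Finset α, z' T) :=
        mem_Icc.mpr ⟨hk1, hkb.trans (aFun_le _ _)⟩
      have hpV : p ∈ Vset w z' (w p.1 - p.2 + 1) := by
        simp only [Vset]
        exact mem_filter.mpr ⟨hp, by omega, by omega, hkb⟩
      have hVmem : Vset w z' (w p.1 - p.2 + 1) ∈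
          (unfoldGround w).powerset.filter (fun S : Finset (α × ℕ) => p ∈ S) :=
        mem_filter.mpr ⟨mem_powerset.mpr (filter_subset _ _), hpV⟩
      have h1 : 1 ≤ ((Icc 1 (∑ T : Finset α, z' T)).filter
          fun k => Vset w z' k = Vset w z' (w p.1 - p.2 + 1)).card :=
        Finset.card_pos.mpr ⟨w p.1 - p.2 + 1, mem_filter.mpr ⟨hkB, rfl⟩⟩
      have hs := Finset.single_le_sum (f := fun S : Finset (α × ℕ) =>
        ((Icc 1 (∑ T : Finset α, y' T)).filter fun k => Uset w y' k = S).card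
        + ((Icc 1 (∑ T : Finset α, z' T)).filter fun k => Vset w z' k = S).card)
        (fun _ _ => Nat.zero_le _) hVmem
      exact le_trans (le_trans h1 (Nat.le_add_left _ _)) hs
  · -- objective value
    rw [Finset.sum_add_distrib, Finset.sum_add_distrib, Finset.powerset_univ]
    have e1 : ∑ S ∈ (unfoldGround w).powerset,
          ((Icc 1 (∑ T : Finset α, y' T)).filter fun k => Uset w y' k = S).card
            * frank (UnfoldIndep1 M'₁ w W) S
        = ∑ k ∈ Icc 1 (∑ T : Finset α, y' T), frank (UnfoldIndep1 M'₁ w W) (Uset w y' k) :=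
      sum_count_mul _ _ _ (fun k _ => mem_powerset.mpr (filter_subset _ _)) _
    have e2 : ∑ S ∈ (unfoldGround w).powerset,
          ((Icc 1 (∑ T : Finset α, z' T)).filter fun k => Vset w z' k = S).card
            * frank (UnfoldIndep2 M'₂ w W) S
        = ∑ k ∈ Icc 1 (∑ T : Finset α, z' T), frank (UnfoldIndep2 M'₂ w W) (Vset w z' k) :=
      sum_count_mul _ _ _ (fun k _ => mem_powerset.mpr (filter_subset _ _)) _
    rw [e1, e2]
    have b1 : ∑ k ∈ Icc 1 (∑ T : Finset α, y' T), frank (UnfoldIndep1 M'₁ w W) (Uset w y' k)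
        ≤ ∑ S : Finset α, y' S * M'₁.rank S := by
      calc ∑ k ∈ Icc 1 (∑ T : Finset α, y' T), frank (UnfoldIndep1 M'₁ w W) (Uset w y' k)
          ≤ ∑ k ∈ Icc 1 (∑ T : Finset α, y' T),
              M'₁.rank (univ.filter fun e => k ≤ aFun y' e) :=
            Finset.sum_le_sum fun k hk => frank_Uset_le M'₁ w W hw y' k (mem_Icc.mp hk).1
        _ ≤ ∑ S : Finset α, y' S * M'₁.rank S :=
            chain_sum M'₁.rank (fun S T h => rank_mono M'₁ h) _ y' hy'chain rfl
    have b2 : ∑ k ∈ Icc 1 (∑ T : Finset α, z' T), frank (UnfoldIndep2 M'₂ w W) (Vset w z' k)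
        ≤ ∑ S : Finset α, z' S * M'₂.rank S := by
      calc ∑ k ∈ Icc 1 (∑ T : Finset α, z' T), frank (UnfoldIndep2 M'₂ w W) (Vset w z' k)
          ≤ ∑ k ∈ Icc 1 (∑ T : Finset α, z' T),
              M'₂.rank (univ.filter fun e => k ≤ aFun z' e) :=
            Finset.sum_le_sum fun k hk => frank_Vset_le M'₂ w W hw z' k (mem_Icc.mp hk).1
        _ ≤ ∑ S : Finset α, z' S * M'₂.rank S :=
            chain_sum M'₂.rank (fun S T h => rank_mono M'₂ h) _ z' hz'chain rfl
    exact add_le_add b1 b2
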